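/- Let C be a finite set of candidates, PW = {pw_1,…,pw_l} ⊆ C a nonempty set of possible winners, and P a preference order on C with P(pw_a,pw_b) if and only if a < b. If a preference order P' on C locally dominates P (given PW), then no segment between two consecutive possible winners decreases, i.e. |[pw_a, P', pw_{a+1}]| ≥ |[pw_a, P, pw_{a+1}]| for all a ∈ {1,…,l−1}. -/
import Mathlib


/-- A preference order: a strict total order on candidates. -/
def IsPref {C : Type*} (P : C → C → Prop) : Prop :=
  (∀ a b : C, a ≠ b → P a b ∨ P b a) ∧ (∀ a : C, ¬ P a a) ∧
    ∀ a b c : C, P a b → P b c → P a c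

/-- The Borda score that preference order `P` gives candidate `c`. -/
noncomputable def borda {C : Type*} [Fintype C] (P : C → C → Prop) (c : C) : ℕ :=
  1 + Set.ncard {c' : C | P c c'}

/-- `c` is the outcome `F(s, P)`: it beats every other candidate either in total score
`s + borda`, or on equal total score by the tie-breaking order `tb`. -/
def IsWinner {C : Type*} [Fintype C] (tb : C → C → Prop) (s : C → ℕ)
    (P : C → C → Prop) (c : C) : Prop :=
  ∀ c' : C, c' ≠ c →
    s c' + borda P c' < s c + borda P c ∨
      (s c' + borda P c' = s c + borda P c ∧ tb c c')

/-- `s` is a possible world for the set `PW` of possible winners. -/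
def PossibleWorld {C : Type*} [Fintype C] (tb : C → C → Prop) (PW : Set C)
    (s : C → ℕ) : Prop :=
  ∀ R : C → C → Prop, IsPref R → ∀ c : C, IsWinner tb s R c → c ∈ PW

/-- `P'` locally dominates `P` given the possible-winner set `PW`. -/
def LocDom {C : Type*} [Fintype C] (tb : C → C → Prop) (PW : Set C)
    (P' P : C → C → Prop) : Prop :=
  (∀ s : C → ℕ, PossibleWorld tb PW s →
      ∀ w' w : C, IsWinner tb s P' w' → IsWinner tb s P w → w' = w ∨ P w' w) ∧
  ∃ s : C → ℕ, PossibleWorld tb PW s ∧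
      ∃ w' w : C, IsWinner tb s P' w' ∧ IsWinner tb s P w ∧ P w' w

/-- The (closed) segment `[c, P, c']` of candidates between `c` and `c'`. -/
def seg {C : Type*} (P : C → C → Prop) (c c' : C) : Set C :=
  {d : C | (d = c ∨ P c d) ∧ (d = c' ∨ P d c')}

lemma pref_asymm {C : Type*} {Q : C → C → Prop} (hQ : IsPref Q) {a b : C}
    (h : Q a b) : ¬ Q b a := fun h' => hQ.2.1 a (hQ.2.2 a b a h h')

lemma borda_le_card {C : Type*} [Fintype C] {Q : C → C → Prop} (hQ : IsPref Q)
    (c : C) : borda Q c ≤ Fintype.card C := by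
  have h1 : c ∉ {c' : C | Q c c'} := hQ.2.1 c
  have h2 : (insert c {c' : C | Q c c'}).ncard ≤ (Set.univ : Set C).ncard :=
    Set.ncard_le_ncard (Set.subset_univ _) Set.finite_univ
  rw [Set.ncard_insert_of_notMem h1 (Set.toFinite _), Set.ncard_univ] at h2
  simpa [borda, Nat.add_comm] using h2

lemma borda_seg {C : Type*} [Fintype C] {Q : C → C → Prop} (hQ : IsPref Q)
    {a b : C} (hab : Q a b) :
    borda Q a + 1 = borda Q b + (seg Q a b).ncard := by
  obtain ⟨htot, hirr, htrans⟩ := hQ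
  have hA : {c' : C | Q a c'} = {c' : C | Q b c'} ∪ (seg Q a b \ {a}) := by
    ext c
    simp only [Set.mem_setOf_eq, Set.mem_union, Set.mem_diff, Set.mem_singleton_iff, seg]
    constructor
    · intro hac
      by_cases hbc : Q b c
      · exact Or.inl hbc
      · refine Or.inr ⟨⟨Or.inr hac, ?_⟩, ?_⟩
        · by_cases hcb : c = b
          · exact Or.inl hcb
          · exact Or.inr ((htot b c (fun e => hcb e.symm)).resolve_left hbc)
        · rintro rfl; exact hirr _ hac
    · rintro (hbc | ⟨⟨h1, h2⟩, hna⟩)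
      · exact htrans a b c hab hbc
      · rcases h1 with rfl | h1
        · exact absurd rfl hna
        · exact h1
  have hdisj : Disjoint {c' : C | Q b c'} (seg Q a b \ {a}) := by
    rw [Set.disjoint_left]
    rintro c hbc ⟨⟨h1, h2⟩, hna⟩
    rcases h2 with rfl | h2
    · exact hirr c hbc
    · exact hirr c (htrans c b c h2 hbc)
  have haseg : a ∈ seg Q a b := ⟨Or.inl rfl, Or.inr hab⟩
  have h3 : (seg Q a b \ {a}).ncard + 1 = (seg Q a b).ncard :=
    Set.ncard_diff_singleton_add_one haseg (Set.toFinite _)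
  have h4 : {c' : C | Q a c'}.ncard
      = {c' : C | Q b c'}.ncard + (seg Q a b \ {a}).ncard := by
    rw [hA, Set.ncard_union_eq hdisj (Set.toFinite _) (Set.toFinite _)]
  simp only [borda]
  omega

lemma borda_lt_of_rev {C : Type*} [Fintype C] {Q : C → C → Prop} (hQ : IsPref Q)
    {a b : C} (hba : Q b a) : borda Q a + 1 ≤ borda Q b := by
  have hsub : insert a {c' : C | Q a c'} ⊆ {c' : C | Q b c'} := by
    intro c hc
    rcases Set.mem_insert_iff.mp hc with rfl | hc
    · exact hba
    · exact hQ.2.2 b a c hba hc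
  have h1 : a ∉ {c' : C | Q a c'} := hQ.2.1 a
  have h2 := Set.ncard_le_ncard hsub (Set.toFinite _)
  rw [Set.ncard_insert_of_notMem h1 (Set.toFinite _)] at h2
  simp only [borda]; omega

lemma borda_seg_le {C : Type*} [Fintype C] {Q : C → C → Prop} (hQ : IsPref Q)
    {a b : C} (hab : a ≠ b) :
    borda Q a + 1 ≤ borda Q b + (seg Q a b).ncard := by
  rcases hQ.1 a b hab with h | h
  · exact le_of_eq (borda_seg hQ h)
  · have := borda_lt_of_rev hQ h; omega

theorem statement2 {C : Type*} [Fintype C]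
    (tb : C → C → Prop) (htb : IsPref tb)
    (l : ℕ) (hl : 0 < l) (pw : Fin l → C) (hinj : Function.Injective pw)
    (P P' : C → C → Prop) (hP : IsPref P) (hP' : IsPref P')
    (horder : ∀ a b : Fin l, P (pw a) (pw b) ↔ a < b)
    (hdom : LocDom tb (Set.range pw) P' P) :
    ∀ a : ℕ, ∀ h : a + 1 < l,
      (seg P (pw ⟨a, by omega⟩) (pw ⟨a + 1, h⟩)).ncard ≤
        (seg P' (pw ⟨a, by omega⟩) (pw ⟨a + 1, h⟩)).ncard := by
  classical
  intro a h
  by_contra hcon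
  push_neg at hcon
  set x : C := pw ⟨a, by omega⟩ with hxdef
  set y : C := pw ⟨a + 1, h⟩ with hydef
  have hij : (⟨a, by omega⟩ : Fin l) ≠ ⟨a + 1, h⟩ := by
    simp only [ne_eq, Fin.mk.injEq]
    omega
  have hxy : x ≠ y := fun e => hij (hinj e)
  have hPxy : P x y := (horder _ _).mpr (by simp [Fin.lt_def])
  set k : ℕ := (seg P x y).ncard with hkdef
  set k' : ℕ := (seg P' x y).ncard with hk'def
  have hlt : k' < k := hcon
  -- k ≥ 2
  have hk2 : 2 ≤ k := by
    have hsub : ({x, y} : Set C) ⊆ seg P x y := by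
      rintro c (rfl | rfl)
      · exact ⟨Or.inl rfl, Or.inr hPxy⟩
      · exact ⟨Or.inr hPxy, Or.inl rfl⟩
    have := Set.ncard_le_ncard hsub (Set.toFinite _)
    rwa [Set.ncard_pair hxy] at this
  set n : ℕ := Fintype.card C with hndef
  set t : ℕ := if tb y x then k - 2 else k - 1 with htdef
  set s : C → ℕ := fun c => if c = x then n else if c = y then n + t else 0 with hsdef
  have hsx : s x = n := by simp [hsdef]
  have hsy : s y = n + t := by simp [hsdef, hxy.symm]
  have hsother : ∀ c : C, c ≠ x → c ≠ y → s c = 0 := by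
    intro c h1 h2; simp [hsdef, h1, h2]
  have hb1 : ∀ (Q : C → C → Prop) (c : C), 1 ≤ borda Q c := fun Q c => Nat.le_add_right 1 _
  -- s is a possible world
  have hPW : PossibleWorld tb (Set.range pw) s := by
    intro R hR c hc
    by_contra hcr
    have hcx : c ≠ x := fun e => hcr (e ▸ ⟨_, rfl⟩)
    have hcy : c ≠ y := fun e => hcr (e ▸ ⟨_, rfl⟩)
    have := hc x hcx.symm
    have h1 : s x + borda R x ≤ s c + borda R c := by
      rcases this with h' | h'
      · omega
      · omega
    rw [hsx, hsother c hcx hcy] at h1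
    have := borda_le_card hR c
    have := hb1 R x
    omega
  -- x wins under P
  have hWP : IsWinner tb s P x := by
    intro c' hc'
    by_cases hcy : c' = y
    · subst hcy
      have hbs := borda_seg hP hPxy
      rw [hsx, hsy]
      rw [← hkdef] at hbs
      by_cases hcase : tb y x
      · left
        have ht : t = k - 2 := by rw [htdef, if_pos hcase]
        omega
      · right
        have ht : t = k - 1 := by rw [htdef, if_neg hcase]
        refine ⟨by omega, ?_⟩
        exact (htb.1 x y hxy).resolve_right hcase
    · left
      rw [hsother c' hc' hcy, hsx]
      have := borda_le_card hP c'
      have := hb1 P x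
      omega
  -- y wins under P'
  have hWP' : IsWinner tb s P' y := by
    intro c' hc'
    by_cases hcx : c' = x
    · subst hcx
      have hbs := borda_seg_le hP' hxy
      rw [← hk'def] at hbs
      rw [hsx, hsy]
      by_cases hcase : tb y x
      · have ht : t = k - 2 := by rw [htdef, if_pos hcase]
        rcases Nat.lt_or_ge (n + borda P' x) (n + t + borda P' y) with h' | h'
        · left; exact h'
        · right; exact ⟨by omega, hcase⟩
      · left
        have ht : t = k - 1 := by rw [htdef, if_neg hcase]
        omega
    · left
      rw [hsother c' hcx hc', hsy]
      have := borda_le_card hP' c'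
      have := hb1 P' y
      omega
  rcases hdom.1 s hPW y x hWP' hWP with he | hpyx
  · exact hxy he.symm
  · have h2 : a + 1 < a := Fin.mk_lt_mk.mp ((horder _ _).mp hpyx)
    omega
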